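/- Let p be prime and f: ℤ/pℤ → ℂ a nonzero function. Then |supp(f)| + |supp(f̂)| ≥ p + 1. -/

import Mathlib

open MvPolynomial


namespace Tao

variable {n : ℕ}

noncomputable abbrev subst (i j : Fin n) : Fin n → MvPolynomial (Fin n) ℤ :=
  fun k => if k = j then X i else X k

/-- key: (X j - X i) divides P - P∘subst -/
lemma sub_dvd_sub_aeval (i j : Fin n) (P : MvPolynomial (Fin n) ℤ) :
    (X j - X i) ∣ P - aeval (subst i j) P := by
  induction P using MvPolynomial.induction_on with
  | C a => simp [subst]
  | add P Q hP hQ =>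
      rw [map_add]
      have : P + Q - (aeval (subst i j) P + aeval (subst i j) Q)
          = (P - aeval (subst i j) P) + (Q - aeval (subst i j) Q) := by ring
      rw [this]; exact dvd_add hP hQ
  | mul_X P k hP =>
      rw [map_mul, aeval_X]
      have : P * X k - aeval (subst i j) P * subst i j k
          = (P - aeval (subst i j) P) * X k + aeval (subst i j) P * (X k - subst i j k) := by
        ring
      rw [this]
      refine dvd_add (Dvd.dvd.mul_right hP _) (Dvd.dvd.mul_left ?_ _)
      by_cases h : k = j
      · subst h; simp [subst]
      · simp [subst, h]

lemma sub_dvd_of_aeval_eq_zero (i j : Fin n) (P : MvPolynomial (Fin n) ℤ)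
    (h : aeval (subst i j) P = 0) : (X j - X i) ∣ P := by
  have := sub_dvd_sub_aeval i j P
  rwa [h, sub_zero] at this

lemma X_sub_X_ne_zero {i j : Fin n} (h : i ≠ j) :
    (X j - X i : MvPolynomial (Fin n) ℤ) ≠ 0 :=
  sub_ne_zero.mpr (fun hh => h (MvPolynomial.X_injective hh).symm)

lemma prime_X_sub_X {i j : Fin n} (h : i ≠ j) :
    Prime (X j - X i : MvPolynomial (Fin n) ℤ) := by
  rw [← Ideal.span_singleton_prime (X_sub_X_ne_zero h)]
  have hker : Ideal.span {(X j - X i : MvPolynomial (Fin n) ℤ)}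
      = RingHom.ker (aeval (subst i j) : MvPolynomial (Fin n) ℤ →ₐ[ℤ] MvPolynomial (Fin n) ℤ) := by
    apply le_antisymm
    · rw [Ideal.span_le, Set.singleton_subset_iff]
      simp only [SetLike.mem_coe, RingHom.mem_ker, map_sub, aeval_X]
      simp [subst, h.symm]
    · intro P hP
      rw [RingHom.mem_ker] at hP
      rw [Ideal.mem_span_singleton]
      exact sub_dvd_of_aeval_eq_zero i j P hP
  rw [hker]
  exact RingHom.ker_isPrime _

/-- generic: product of pairwise non-associated primes each dividing D divides D -/
lemma prod_dvd_of_forall_dvd {R : Type*} [CommRing R] [IsDomain R] {ι : Type*} [DecidableEq ι]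
    (t : Finset ι) (g : ι → R) :
    (∀ q ∈ t, Prime (g q)) →
    (∀ q ∈ t, ∀ q' ∈ t, q ≠ q' → ¬ Associated (g q) (g q')) →
    ∀ (D : R), (∀ q ∈ t, g q ∣ D) →
    (∏ q ∈ t, g q) ∣ D := by
  induction t using Finset.induction_on with
  | empty => simp
  | @insert a t ha ih =>
      intro hprime hna D hdvd
      obtain ⟨D', rfl⟩ := hdvd a (Finset.mem_insert_self a t)
      rw [Finset.prod_insert ha]
      refine mul_dvd_mul_left _ (ih (fun q hq => hprime q (Finset.mem_insert_of_mem hq))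
        (fun q hq q' hq' hne => hna q (Finset.mem_insert_of_mem hq) q'
          (Finset.mem_insert_of_mem hq') hne) D' (fun q hq => ?_))
      have hq' := hdvd q (Finset.mem_insert_of_mem hq)
      have hqp := hprime q (Finset.mem_insert_of_mem hq)
      rcases hqp.dvd_or_dvd hq' with hc | hc
      · exact absurd (hqp.associated_of_dvd (hprime a (Finset.mem_insert_self a t)) hc)
          (hna q (Finset.mem_insert_of_mem hq) a (Finset.mem_insert_self a t)
            (fun hh => ha (hh ▸ hq)))
      · exact hc

end Tao
namespace Tao2
open MvPolynomial Tao

variable {n : ℕ}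

noncomputable def Vand (n : ℕ) : MvPolynomial (Fin n) ℤ :=
  ∏ i : Fin n, ∏ j ∈ Finset.Ioi i, (X j - X i)

noncomputable def DD (b : Fin n → ℕ) : MvPolynomial (Fin n) ℤ :=
  (Matrix.of fun i j : Fin n => (X i : MvPolynomial (Fin n) ℤ) ^ (b j)).det

def S₂ (n : ℕ) : Finset ((_ : Fin n) × Fin n) := Finset.univ.sigma (fun i : Fin n => Finset.Ioi i)

lemma mem_S₂ {q : (_ : Fin n) × Fin n} (hq : q ∈ S₂ n) : q.fst < q.snd := by
  simpa [S₂] using hq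

lemma not_assoc' {i j i' j' : Fin n} (hq : i < j) (hq' : i' < j')
    (hne : i ≠ i' ∨ j ≠ j') :
    ¬ Associated (X j - X i : MvPolynomial (Fin n) ℤ) (X j' - X i') := by
  intro hass
  have hdvd := hass.dvd
  have h0 := (aeval (subst i j) : MvPolynomial (Fin n) ℤ →ₐ[ℤ] _).toRingHom.map_dvd hdvd
  have hker' : (aeval (subst i j)).toRingHom (X j - X i : MvPolynomial (Fin n) ℤ) = 0 := by
    simp [subst, hq.ne']
  simp only [AlgHom.toRingHom_eq_coe, RingHom.coe_coe] at hker'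
  replace h0 : (aeval (subst i j)) (X j - X i : MvPolynomial (Fin n) ℤ) ∣ (aeval (subst i j)) (X j' - X i') := h0
  rw [hker'] at h0
  have h0 : (aeval (subst i j)) (X j' - X i' : MvPolynomial (Fin n) ℤ) = 0 :=
    zero_dvd_iff.mp h0
  rw [map_sub, aeval_X, aeval_X] at h0
  simp only [subst] at h0
  by_cases hj : j' = j
  · have hi : i' ≠ j := (hj ▸ hq').ne
    rw [if_pos hj, if_neg hi] at h0
    have h1 : i = i' := MvPolynomial.X_injective (sub_eq_zero.mp h0)
    rcases hne with h | h
    · exact h h1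
    · exact h hj.symm
  · rw [if_neg hj] at h0
    by_cases hi : i' = j
    · rw [if_pos hi] at h0
      have h1 : j' = i := MvPolynomial.X_injective (sub_eq_zero.mp h0)
      rw [hi, h1] at hq'
      exact absurd hq (lt_asymm hq')
    · rw [if_neg hi] at h0
      exact hq'.ne' (MvPolynomial.X_injective (sub_eq_zero.mp h0))

lemma not_assoc {q q' : (_ : Fin n) × Fin n} (hq : q.fst < q.snd) (hq' : q'.fst < q'.snd)
    (hne : q ≠ q') :
    ¬ Associated (X q.snd - X q.fst : MvPolynomial (Fin n) ℤ) (X q'.snd - X q'.fst) := by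
  apply not_assoc' hq hq'
  by_contra h
  push_neg at h
  exact hne (Sigma.ext h.1 (heq_of_eq h.2))

lemma X_sub_dvd_DD (b : Fin n → ℕ) {q : (_ : Fin n) × Fin n} (hq : q.fst < q.snd) :
    (X q.snd - X q.fst : MvPolynomial (Fin n) ℤ) ∣ DD b := by
  apply sub_dvd_of_aeval_eq_zero
  rw [DD, ← RingHom.coe_coe (aeval (subst q.fst q.snd) : MvPolynomial (Fin n) ℤ →ₐ[ℤ] _),
    RingHom.map_det]
  apply Matrix.det_zero_of_row_eq hq.ne'
  funext j
  simp [subst, hq.ne']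

lemma Vand_dvd_DD (b : Fin n → ℕ) : Vand n ∣ DD b := by
  have : Vand n = ∏ q ∈ S₂ n, (X q.snd - X q.fst : MvPolynomial (Fin n) ℤ) := by
    rw [Vand, S₂]
    exact Finset.prod_sigma' _ _ _
  rw [this]
  exact prod_dvd_of_forall_dvd (S₂ n) _
    (fun q hq => prime_X_sub_X (mem_S₂ hq).ne)
    (fun q hq q' hq' hne => not_assoc (mem_S₂ hq) (mem_S₂ hq') hne)
    (DD b) (fun q hq => X_sub_dvd_DD b (mem_S₂ hq))

end Tao2
namespace Tao3
open MvPolynomial Tao Tao2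

variable {n : ℕ}

noncomputable def gg (u v : ℕ) : Polynomial ℤ :=
  Polynomial.X ^ u * ∑ t ∈ Finset.range (v - u), Polynomial.X ^ t

lemma hgeom {u v : ℕ} (h : u < v) :
    (Polynomial.X : Polynomial ℤ) ^ v - Polynomial.X ^ u = (Polynomial.X - 1) * gg u v := by
  have h2 : (Polynomial.X - 1) * gg u v
      = Polynomial.X ^ u * ((∑ t ∈ Finset.range (v - u), Polynomial.X ^ t) * (Polynomial.X - 1)) := by
    rw [gg]; ring
  rw [h2, geom_sum_mul, mul_sub, mul_one, ← pow_add, Nat.add_sub_cancel' h.le]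

lemma eval1_gg (u v : ℕ) : (gg u v).eval 1 = ((v - u : ℕ) : ℤ) := by
  simp [gg, Polynomial.eval_finset_sum]

noncomputable def CC (n : ℕ) : Polynomial ℤ :=
  ∏ i : Fin n, ∏ _j ∈ Finset.Ioi i, (Polynomial.X - 1)

lemma CC_ne_zero : CC n ≠ 0 := by
  rw [CC]
  apply Finset.prod_ne_zero_iff.mpr
  intro i _
  apply Finset.prod_ne_zero_iff.mpr
  intro j _
  have h := Polynomial.X_sub_C_ne_zero (R := ℤ) 1
  simpa using h

lemma prod_fact {w : Fin n → ℕ} (hw : StrictMono w) :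
    (∏ i : Fin n, ∏ j ∈ Finset.Ioi i, ((Polynomial.X : Polynomial ℤ) ^ (w j) - Polynomial.X ^ (w i)))
      = CC n * ∏ i : Fin n, ∏ j ∈ Finset.Ioi i, gg (w i) (w j) := by
  rw [CC, ← Finset.prod_mul_distrib]
  apply Finset.prod_congr rfl
  intro i _
  rw [← Finset.prod_mul_distrib]
  apply Finset.prod_congr rfl
  intro j hj
  exact hgeom (hw (Finset.mem_Ioi.mp hj))

lemma aeval_Vand {w : Fin n → ℕ} (hw : StrictMono w) :
    aeval (fun i => (Polynomial.X : Polynomial ℤ) ^ (w i)) (Vand n)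
      = CC n * ∏ i : Fin n, ∏ j ∈ Finset.Ioi i, gg (w i) (w j) := by
  rw [← prod_fact hw, Vand, map_prod]
  apply Finset.prod_congr rfl
  intro i _
  rw [map_prod]
  apply Finset.prod_congr rfl
  intro j _
  rw [map_sub, aeval_X, aeval_X]

lemma aeval_DD {b : Fin n → ℕ} (hb : StrictMono b) :
    aeval (fun i : Fin n => (Polynomial.X : Polynomial ℤ) ^ ((i : ℕ))) (DD b)
      = CC n * ∏ i : Fin n, ∏ j ∈ Finset.Ioi i, gg (b i) (b j) := by
  have hdet : (aeval (fun i : Fin n => (Polynomial.X : Polynomial ℤ) ^ ((i : ℕ)))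
        : MvPolynomial (Fin n) ℤ →ₐ[ℤ] Polynomial ℤ).mapMatrix
        (Matrix.of fun i j : Fin n => (X i : MvPolynomial (Fin n) ℤ) ^ (b j))
      = (Matrix.vandermonde fun j : Fin n => (Polynomial.X : Polynomial ℤ) ^ (b j)).transpose := by
    apply Matrix.ext
    intro i j
    simp [Matrix.vandermonde, Matrix.transpose_apply, ← pow_mul, mul_comm]
  rw [DD, AlgHom.map_det, hdet, Matrix.det_transpose, Matrix.det_vandermonde]
  exact prod_fact hb

lemma Q_eval_one_eq {b : Fin n → ℕ} (hb : StrictMono b) {Q : MvPolynomial (Fin n) ℤ}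
    (hQ : DD b = Vand n * Q) :
    (∏ i : Fin n, ∏ j ∈ Finset.Ioi i, ((b j - b i : ℕ) : ℤ))
      = (∏ i : Fin n, ∏ j ∈ Finset.Ioi i, (((j : ℕ) - (i : ℕ) : ℕ) : ℤ))
        * aeval (fun _ : Fin n => (1 : ℤ)) Q := by
  have hid : StrictMono (fun i : Fin n => (i : ℕ)) := fun i j h => h
  have h1 := congrArg (aeval (fun i : Fin n => (Polynomial.X : Polynomial ℤ) ^ ((i : ℕ)))) hQ
  rw [map_mul, aeval_DD hb, aeval_Vand hid, mul_assoc] at h1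
  have h2 := mul_left_cancel₀ (CC_ne_zero) h1
  have h3 := congrArg (Polynomial.eval 1) h2
  rw [Polynomial.eval_mul, Polynomial.eval_prod, Polynomial.eval_prod] at h3
  have heval : Polynomial.eval 1
      (aeval (fun i : Fin n => (Polynomial.X : Polynomial ℤ) ^ ((i : ℕ))) Q)
      = aeval (fun _ : Fin n => (1 : ℤ)) Q := by
    have hcomp : (Polynomial.aeval (1 : ℤ)).comp
        (MvPolynomial.aeval (fun i : Fin n => (Polynomial.X : Polynomial ℤ) ^ ((i : ℕ))))
        = MvPolynomial.aeval (fun _ : Fin n => (1 : ℤ)) := by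
      apply MvPolynomial.algHom_ext
      intro i
      simp
    have := DFunLike.congr_fun hcomp Q
    simpa using this
  rw [heval] at h3
  calc (∏ i : Fin n, ∏ j ∈ Finset.Ioi i, ((b j - b i : ℕ) : ℤ))
      = ∏ i : Fin n, Polynomial.eval 1 (∏ j ∈ Finset.Ioi i, gg (b i) (b j)) := by
        apply Finset.prod_congr rfl; intro i _
        rw [Polynomial.eval_prod]
        exact (Finset.prod_congr rfl (fun j _ => (eval1_gg _ _).symm))
    _ = (∏ i : Fin n, Polynomial.eval 1 (∏ j ∈ Finset.Ioi i, gg ((i : ℕ)) ((j : ℕ))))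
        * aeval (fun _ : Fin n => (1 : ℤ)) Q := h3
    _ = _ := by
        congr 1
        apply Finset.prod_congr rfl; intro i _
        rw [Polynomial.eval_prod]
        exact (Finset.prod_congr rfl (fun j _ => eval1_gg _ _))

end Tao3
namespace Tao4
open MvPolynomial Tao Tao2 Tao3

variable {n : ℕ}

lemma not_dvd_Q1 {p : ℕ} (hp : p.Prime) {b : Fin n → ℕ} (hb : StrictMono b)
    (hbp : ∀ i, b i < p) {Q : MvPolynomial (Fin n) ℤ} (hQ : DD b = Vand n * Q) :
    ¬ ((p : ℤ) ∣ aeval (fun _ : Fin n => (1 : ℤ)) Q) := by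
  intro hd
  have key := Q_eval_one_eq hb hQ
  have hpz : Prime (p : ℤ) := Nat.prime_iff_prime_int.mp hp
  have hdvd : (p : ℤ) ∣ ∏ i : Fin n, ∏ j ∈ Finset.Ioi i, ((b j - b i : ℕ) : ℤ) := by
    rw [key]; exact Dvd.dvd.mul_left hd _
  obtain ⟨i, -, hi⟩ := (hpz.dvd_finset_prod_iff _).mp hdvd
  obtain ⟨j, hj, hd2⟩ := (hpz.dvd_finset_prod_iff _).mp hi
  have hij : i < j := Finset.mem_Ioi.mp hj
  have hbij : b i < b j := hb hij
  have hdn : p ∣ (b j - b i) := Int.natCast_dvd_natCast.mp hd2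
  have h1 : 0 < b j - b i := by omega
  have h2 := Nat.le_of_dvd h1 hdn
  have h3 := hbp j
  omega

theorem cheb_det_ne_zero {p : ℕ} (hp : p.Prime) {a b : Fin n → ℕ}
    (ha : StrictMono a) (hb : StrictMono b) (hap : ∀ i, a i < p) (hbp : ∀ i, b i < p)
    {ω : ℂ} (hω : IsPrimitiveRoot ω p) :
    (Matrix.of fun i j : Fin n => ω ^ (a i * b j)).det ≠ 0 := by
  obtain ⟨Q, hQ⟩ := Vand_dvd_DD (n := n) b
  intro hdet0
  set φω := (aeval (fun i : Fin n => ω ^ (a i)) : MvPolynomial (Fin n) ℤ →ₐ[ℤ] ℂ) with hφω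
  have hmap : φω.mapMatrix (Matrix.of fun i j : Fin n => (X i : MvPolynomial (Fin n) ℤ) ^ (b j))
      = (Matrix.of fun i j : Fin n => ω ^ (a i * b j)) := by
    apply Matrix.ext
    intro i j
    simp [hφω, ← pow_mul]
  have hD0 : φω (DD b) = 0 := by
    rw [DD, AlgHom.map_det, hmap, hdet0]
  have hV : φω (Vand n) ≠ 0 := by
    rw [Vand, map_prod]
    apply Finset.prod_ne_zero_iff.mpr
    intro i _
    rw [map_prod]
    apply Finset.prod_ne_zero_iff.mpr
    intro j hj
    rw [map_sub]
    simp only [hφω, aeval_X]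
    apply sub_ne_zero.mpr
    intro heq
    exact absurd (hω.pow_inj (hap j) (hap i) heq) (ha (Finset.mem_Ioi.mp hj)).ne'
  have hQ0 : φω Q = 0 := by
    rw [hQ, map_mul] at hD0
    rcases mul_eq_zero.mp hD0 with h | h
    · exact absurd h hV
    · exact h
  set φa := (aeval (fun i : Fin n => (Polynomial.X : Polynomial ℤ) ^ (a i)) :
      MvPolynomial (Fin n) ℤ →ₐ[ℤ] Polynomial ℤ) with hφa
  set q1 : Polynomial ℤ := φa Q with hq1def
  have hcomp : (Polynomial.aeval ω).comp φa = φω := by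
    apply MvPolynomial.algHom_ext
    intro i
    simp [hφa, hφω]
  have hq1ω : Polynomial.aeval ω q1 = 0 := by
    have := DFunLike.congr_fun hcomp Q
    simp only [AlgHom.comp_apply] at this
    rw [hq1def, this, hQ0]
  have hmin : minpoly ℚ ω ∣ q1.map (algebraMap ℤ ℚ) := by
    apply minpoly.dvd
    rw [Polynomial.aeval_map_algebraMap]
    exact hq1ω
  have hcyc : Polynomial.cyclotomic p ℚ = minpoly ℚ ω :=
    Polynomial.cyclotomic_eq_minpoly_rat hω hp.pos
  have hdvdQ : (Polynomial.cyclotomic p ℤ).map (Int.castRingHom ℚ) ∣ q1.map (Int.castRingHom ℚ) := by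
    rw [Polynomial.map_cyclotomic_int, hcyc]
    exact hmin
  have hdvdZ : Polynomial.cyclotomic p ℤ ∣ q1 :=
    (Polynomial.map_dvd_map (Int.castRingHom ℚ) Int.cast_injective
      (Polynomial.cyclotomic.monic p ℤ)).mp hdvdQ
  obtain ⟨r, hr⟩ := hdvdZ
  have hfact : Fact p.Prime := ⟨hp⟩
  have heval : q1.eval 1 = (p : ℤ) * r.eval 1 := by
    rw [hr, Polynomial.eval_mul, Polynomial.eval_one_cyclotomic_prime]
  have hcomp1 : (Polynomial.aeval (1 : ℤ)).comp φa = aeval (fun _ : Fin n => (1 : ℤ)) := by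
    apply MvPolynomial.algHom_ext
    intro i
    simp [hφa]
  have heq : q1.eval 1 = aeval (fun _ : Fin n => (1 : ℤ)) Q := by
    have := DFunLike.congr_fun hcomp1 Q
    simp only [AlgHom.comp_apply] at this
    rw [hq1def, ← this]
    rfl
  exact not_dvd_Q1 hp hb hbp hQ (heq ▸ heval ▸ Dvd.intro _ rfl)

end Tao4
open Complex

noncomputable def dft {p : ℕ} [NeZero p] (f : ZMod p → ℂ) (ξ : ZMod p) : ℂ :=
  (p : ℂ)⁻¹ * ∑ x : ZMod p, f x * Complex.exp (-2 * Real.pi * Complex.I * ((x.val : ℂ) * (ξ.val : ℂ)) / p)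

lemma exp_pow (p : ℕ) [NeZero p] (m : ℕ) :
    Complex.exp (-2 * Real.pi * Complex.I * (m : ℂ) / p)
      = ((Complex.exp (2 * Real.pi * Complex.I / p))⁻¹) ^ m := by
  rw [← Complex.exp_neg, ← Complex.exp_nat_mul]
  congr 1
  ring

theorem uncertainty_zmod_p
    (p : ℕ) (hp : p.Prime) [NeZero p]
    (f : ZMod p → ℂ) (hf : f ≠ 0) :
    (Function.support f).ncard + (Function.support (dft f)).ncard ≥ p + 1 := by
  classical
  by_contra hcon
  push_neg at hcon
  rw [Nat.lt_succ_iff] at hcon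
  have hSf : (Function.support f).Finite := Set.toFinite _
  have hSd : (Function.support (dft f)).Finite := Set.toFinite _
  set A : Finset (ZMod p) := hSf.toFinset with hA
  set S : Finset (ZMod p) := hSd.toFinset with hS
  set n : ℕ := A.card with hn
  have hcard : n + S.card ≤ p := by
    rw [hn, hA, hS, ← Set.ncard_eq_toFinset_card _ hSf, ← Set.ncard_eq_toFinset_card _ hSd]
    exact hcon
  have hnpos : 0 < n := by
    rw [hn, Finset.card_pos]
    obtain ⟨x, hx⟩ := Function.ne_iff.mp hf
    have hx' : f x ≠ 0 := by simpa using hx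
    exact ⟨x, by simp [hA, Function.mem_support, hx']⟩
  have hcompl : n ≤ Sᶜ.card := by
    rw [Finset.card_compl, ZMod.card]
    omega
  obtain ⟨B, hBsub, hBcard⟩ := Finset.exists_subset_card_eq hcompl
  -- images under val
  set A' : Finset ℕ := A.image ZMod.val with hA'
  set B' : Finset ℕ := B.image ZMod.val with hB'
  have hA'card : A'.card = n := by
    rw [hA', Finset.card_image_of_injective _ (ZMod.val_injective p)]
  have hB'card : B'.card = n := by
    rw [hB', Finset.card_image_of_injective _ (ZMod.val_injective p), hBcard]
  set eb := A'.orderIsoOfFin hA'card with heb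
  set ea := B'.orderIsoOfFin hB'card with hea
  set bfun : Fin n → ℕ := fun j => (eb j : ℕ) with hbfun
  set afun : Fin n → ℕ := fun i => (ea i : ℕ) with hafun
  have hbmono : StrictMono bfun := fun i j h =>
    (Subtype.strictMono_coe _) (eb.strictMono h)
  have hamono : StrictMono afun := fun i j h =>
    (Subtype.strictMono_coe _) (ea.strictMono h)
  have hbmem : ∀ j, bfun j ∈ A' := fun j => (eb j).2
  have hamem : ∀ i, afun i ∈ B' := fun i => (ea i).2
  have hbp : ∀ j, bfun j < p := by
    intro j
    obtain ⟨y, _, hy⟩ := Finset.mem_image.mp (hbmem j)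
    rw [← hy]; exact ZMod.val_lt y
  have hap : ∀ i, afun i < p := by
    intro i
    obtain ⟨y, _, hy⟩ := Finset.mem_image.mp (hamem i)
    rw [← hy]; exact ZMod.val_lt y
  set ω : ℂ := (Complex.exp (2 * Real.pi * Complex.I / p))⁻¹ with hw
  have hω : IsPrimitiveRoot ω p :=
    (Complex.isPrimitiveRoot_exp p (NeZero.ne p)).inv
  set M : Matrix (Fin n) (Fin n) ℂ := Matrix.of fun i j => ω ^ (afun i * bfun j) with hM
  have hdet : M.det ≠ 0 :=
    Tao4.cheb_det_ne_zero hp hamono hbmono hap hbp hω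
  set c : Fin n → ℂ := fun j => f (((bfun j : ℕ) : ZMod p)) with hc
  -- the point of A corresponding to j
  have hxmem : ∀ j : Fin n, (((bfun j : ℕ) : ZMod p)) ∈ A := by
    intro j
    obtain ⟨y, hyA, hy⟩ := Finset.mem_image.mp (hbmem j)
    rw [← hy, ZMod.natCast_rightInverse y]
    exact hyA
  have hmul : M.mulVec c = 0 := by
    funext i
    set ξ : ZMod p := ((afun i : ℕ) : ZMod p) with hξ
    have hξB : ξ ∈ B := by
      obtain ⟨y, hyB, hy⟩ := Finset.mem_image.mp (hamem i)
      rw [hξ, ← hy, ZMod.natCast_rightInverse y]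
      exact hyB
    have hξval : ξ.val = afun i := ZMod.val_cast_of_lt (hap i)
    have hdft0 : dft f ξ = 0 := by
      have : ξ ∉ Function.support (dft f) := by
        have := hBsub hξB
        rw [Finset.mem_compl, hS, Set.Finite.mem_toFinset] at this
        exact this
      simpa [Function.mem_support, not_not] using this
    have hsum0 : ∑ x : ZMod p, f x * Complex.exp
        (-2 * Real.pi * Complex.I * ((x.val : ℂ) * (ξ.val : ℂ)) / p) = 0 := by
      rw [dft] at hdft0
      rcases mul_eq_zero.mp hdft0 with h | h
      · exact absurd h (inv_ne_zero (Nat.cast_ne_zero.mpr (NeZero.ne p)))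
      · exact h
    have hsumA : ∑ x ∈ A, f x * Complex.exp
        (-2 * Real.pi * Complex.I * ((x.val : ℂ) * (ξ.val : ℂ)) / p) = 0 := by
      rw [← hsum0]
      apply Finset.sum_subset (Finset.subset_univ A)
      intro x _ hx
      have : f x = 0 := by
        by_contra hfx
        exact hx (by simp [hA, Function.mem_support, hfx])
      rw [this, zero_mul]
    have hbij : ∑ j : Fin n, M i j * c j = ∑ x ∈ A, f x * Complex.exp
        (-2 * Real.pi * Complex.I * ((x.val : ℂ) * (ξ.val : ℂ)) / p) := by
      apply Finset.sum_bij (fun (j : Fin n) (_ : j ∈ Finset.univ) => (((bfun j : ℕ) : ZMod p)))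
      · intro j _; exact hxmem j
      · intro j1 _ j2 _ h
        have : bfun j1 = bfun j2 := by
          have h1 := ZMod.val_cast_of_lt (hbp j1)
          have h2 := ZMod.val_cast_of_lt (hbp j2)
          rw [← h1, ← h2, h]
        exact hbmono.injective this
      · intro x hxA
        have hxv : x.val ∈ A' := Finset.mem_image_of_mem _ hxA
        obtain ⟨j, hj⟩ := eb.surjective ⟨x.val, hxv⟩
        refine ⟨j, Finset.mem_univ j, ?_⟩
        have : bfun j = x.val := by show ((eb j : ℕ)) = x.val; rw [hj]
        rw [this, ZMod.natCast_rightInverse x]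
      · intro j _
        have hval : (((bfun j : ℕ) : ZMod p)).val = bfun j := ZMod.val_cast_of_lt (hbp j)
        rw [hM, hc]
        simp only [Matrix.of_apply]
        rw [hval, hξval]
        have hexp : Complex.exp (-2 * Real.pi * Complex.I * ((bfun j : ℂ) * (afun i : ℂ)) / p)
            = ω ^ (afun i * bfun j) := by
          rw [hw, ← exp_pow p (afun i * bfun j)]
          congr 1
          push_cast
          ring
        rw [hexp]
        ring
    have : ∑ j : Fin n, M i j * c j = 0 := by rw [hbij, hsumA]
    simpa [Matrix.mulVec, dotProduct] using this
  have hc0 : c = 0 := Matrix.eq_zero_of_mulVec_eq_zero hdet hmul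
  have hj0 : c ⟨0, hnpos⟩ ≠ 0 := by
    have := hxmem ⟨0, hnpos⟩
    rw [hA, Set.Finite.mem_toFinset, Function.mem_support] at this
    exact this
  rw [hc0] at hj0
  exact hj0 rfl
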